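/- Let λ ∈ (0,2], ε > 0, and suppose T ≥ log(6/(ελ))/λ, N ≥ 6T/ε, and K ≥ max(6T, log(6T/ε)) are positive integers (T a positive real suffices). Then |1/λ - (T/N)·∑_{j=1}^{N} ∑_{k=0}^{K-1} P_{jT/N}(k)·(1-λ)^k| ≤ ε/2. -/

import Mathlib

open Finset

/-- The Poisson probability mass function with parameter `s`. -/
noncomputable def poissonPMF (s : ℝ) (k : ℕ) : ℝ := Real.exp (-s) * s ^ k / (Nat.factorial k)

private lemma real_exp_tsum (y : ℝ) : Real.exp y = ∑' n : ℕ, y ^ n / n.factorial := by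
  rw [Real.exp_eq_exp_ℝ, NormedSpace.exp_eq_tsum_div]

private lemma hasSum_exp' (y : ℝ) :
    HasSum (fun n : ℕ => y ^ n / n.factorial) (Real.exp y) := by
  rw [real_exp_tsum]; exact (Real.summable_pow_div_factorial y).hasSum

private lemma pow_div_factorial_le_exp (K : ℕ) : (K : ℝ) ^ K / K.factorial ≤ Real.exp K :=
  le_hasSum (hasSum_exp' K) K (fun j _ => by positivity)

private lemma exp_tail_bound (s x : ℝ) (hs : 0 ≤ s) (hx : |x| ≤ 1) (K : ℕ) :
    |Real.exp (s * x) - ∑ k ∈ range K, (s * x) ^ k / k.factorial|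
      ≤ s ^ K / K.factorial * Real.exp s := by
  have htail : HasSum (fun n : ℕ => (s * x) ^ (n + K) / (n + K).factorial)
      (Real.exp (s * x) - ∑ k ∈ range K, (s * x) ^ k / k.factorial) := by
    have h0 : HasSum (fun n : ℕ => (s * x) ^ n / n.factorial)
        ((Real.exp (s * x) - ∑ k ∈ range K, (s * x) ^ k / k.factorial)
          + ∑ k ∈ range K, (s * x) ^ k / k.factorial) := by
      rw [sub_add_cancel]; exact hasSum_exp' (s * x)
    exact (hasSum_nat_add_iff K).mpr h0
  have hmaj : ∀ n : ℕ, |(s * x) ^ (n + K) / (n + K).factorial|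
      ≤ s ^ K / K.factorial * (s ^ n / n.factorial) := by
    intro n
    have h1 : |(s * x) ^ (n + K) / ((n + K).factorial : ℝ)|
        = |s * x| ^ (n + K) / (n + K).factorial := by
      rw [abs_div, abs_pow, Nat.abs_cast]
    have h2 : |s * x| ≤ s := by
      rw [abs_mul, abs_of_nonneg hs]
      nlinarith [abs_nonneg x]
    have h3 : |s * x| ^ (n + K) ≤ s ^ (n + K) := pow_le_pow_left₀ (abs_nonneg _) h2 _
    have h4 : (K.factorial * n.factorial : ℝ) ≤ (n + K).factorial := by
      have := Nat.le_of_dvd (Nat.factorial_pos (K + n))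
        (Nat.factorial_mul_factorial_dvd_factorial_add K n)
      rw [Nat.add_comm n K]
      exact_mod_cast this
    rw [h1]
    calc |s * x| ^ (n + K) / ((n + K).factorial : ℝ)
        ≤ s ^ (n + K) / ((n + K).factorial : ℝ) := by gcongr
      _ ≤ s ^ (n + K) / (K.factorial * n.factorial : ℝ) :=
          div_le_div_of_nonneg_left (by positivity) (by positivity) h4
      _ = s ^ K / K.factorial * (s ^ n / n.factorial) := by
          rw [pow_add]; field_simp
  have hsummaj : Summable (fun n : ℕ => s ^ K / K.factorial * (s ^ n / n.factorial)) :=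
    (Real.summable_pow_div_factorial s).mul_left _
  have habs : Summable (fun n : ℕ => |(s * x) ^ (n + K) / (n + K).factorial|) :=
    Summable.of_nonneg_of_le (fun n => abs_nonneg _) hmaj hsummaj
  rw [← htail.tsum_eq]
  calc |∑' n : ℕ, (s * x) ^ (n + K) / (n + K).factorial|
      ≤ ∑' n : ℕ, |(s * x) ^ (n + K) / (n + K).factorial| := by
        have habs' : Summable (fun n : ℕ => ‖(s * x) ^ (n + K) / ((n + K).factorial : ℝ)‖) := by
          simpa only [Real.norm_eq_abs] using habs
        have hb := norm_tsum_le_tsum_norm habs'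
        simpa only [Real.norm_eq_abs] using hb
    _ ≤ ∑' n : ℕ, s ^ K / K.factorial * (s ^ n / n.factorial) := Summable.tsum_le_tsum hmaj habs hsummaj
    _ = s ^ K / K.factorial * Real.exp s := by rw [tsum_mul_left, ← real_exp_tsum]

private lemma inner_step (lam s : ℝ) (hlam : 0 < lam) (hlam2 : lam ≤ 2) (hs : 0 ≤ s)
    (K : ℕ) (hsK : 6 * s ≤ K) :
    |Real.exp (-(lam * s)) - ∑ k ∈ range K, poissonPMF s k * (1 - lam) ^ k|
      ≤ (1 / 2) ^ K := by
  have hx : |1 - lam| ≤ 1 := abs_le.2 ⟨by linarith, by linarith⟩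
  have hrw : ∀ k : ℕ, poissonPMF s k * (1 - lam) ^ k
      = Real.exp (-s) * ((s * (1 - lam)) ^ k / k.factorial) := by
    intro k; unfold poissonPMF; rw [mul_pow]; ring
  have hexp : Real.exp (-(lam * s)) = Real.exp (-s) * Real.exp (s * (1 - lam)) := by
    rw [← Real.exp_add]; congr 1; ring
  have key : |Real.exp (-(lam * s)) - ∑ k ∈ range K, poissonPMF s k * (1 - lam) ^ k|
      ≤ s ^ K / K.factorial := by
    have h1 : Real.exp (-(lam * s)) - ∑ k ∈ range K, poissonPMF s k * (1 - lam) ^ k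
        = Real.exp (-s) * (Real.exp (s * (1 - lam))
            - ∑ k ∈ range K, (s * (1 - lam)) ^ k / k.factorial) := by
      rw [hexp, show (∑ k ∈ range K, poissonPMF s k * (1 - lam) ^ k)
          = Real.exp (-s) * ∑ k ∈ range K, (s * (1 - lam)) ^ k / k.factorial from by
        rw [Finset.mul_sum]; exact Finset.sum_congr rfl fun k _ => hrw k]
      ring
    rw [h1, abs_mul, abs_of_pos (Real.exp_pos _)]
    calc Real.exp (-s) * |Real.exp (s * (1 - lam))
          - ∑ k ∈ range K, (s * (1 - lam)) ^ k / k.factorial|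
        ≤ Real.exp (-s) * (s ^ K / K.factorial * Real.exp s) := by
          have := exp_tail_bound s (1 - lam) hs hx K
          exact mul_le_mul_of_nonneg_left this (Real.exp_pos _).le
      _ = s ^ K / K.factorial := by
          rw [← mul_assoc, mul_comm (Real.exp (-s)), mul_assoc, ← Real.exp_add]
          simp
  refine key.trans ?_
  calc s ^ K / (K.factorial : ℝ)
      ≤ ((K : ℝ) / 6) ^ K / K.factorial := by
        gcongr
        linarith
      _ = (K : ℝ) ^ K / K.factorial * (1 / 6) ^ K := by
        rw [div_pow, one_div_pow]; ring
      _ ≤ Real.exp K * (1 / 6) ^ K :=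
        mul_le_mul_of_nonneg_right (pow_div_factorial_le_exp K) (by positivity)
      _ = (Real.exp 1 / 6) ^ K := by
        have h9 : Real.exp (K : ℝ) = Real.exp 1 ^ K := by
          rw [← Real.exp_nat_mul]; norm_num
        rw [h9, div_pow, div_pow, one_pow, mul_one_div]
      _ ≤ (1 / 2) ^ K := by
        apply pow_le_pow_left₀ (by positivity)
        have := Real.exp_one_lt_d9
        linarith

private lemma riemann_bound (lam T : ℝ) (N : ℕ) (hlam : 0 < lam) (hT : 0 < T) (hN : 0 < N) :
    |1 / lam - (T / N) * ∑ j ∈ Icc 1 N, Real.exp (-(lam * (j * T / N)))|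
      ≤ T / N + Real.exp (-(lam * T)) / lam := by
  set h : ℝ := T / N with hh
  have hNpos : (0:ℝ) < N := Nat.cast_pos.mpr hN
  have hhpos : 0 < h := by positivity
  have hN0 : (N:ℝ) ≠ 0 := ne_of_gt hNpos
  set x : ℝ := lam * h with hx
  have hxpos : 0 < x := by positivity
  set r : ℝ := Real.exp (-x) with hr
  have hr0 : 0 < r := Real.exp_pos _
  have hr1 : r < 1 := by
    rw [hr]; exact Real.exp_lt_one_iff.mpr (by linarith)
  have hterm : ∀ j ∈ Icc 1 N, Real.exp (-(lam * (j * T / N))) = r ^ j := by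
    intro j _
    rw [hr, ← Real.exp_nat_mul]
    congr 1
    rw [hx, hh]
    ring
  rw [Finset.sum_congr rfl hterm]
  have key1 : x * r ≤ 1 - r := by
    have := Real.add_one_le_exp x
    have hre : r = (Real.exp x)⁻¹ := by rw [hr, Real.exp_neg]
    have hexpos : (0:ℝ) < Real.exp x := Real.exp_pos _
    rw [hre]
    rw [mul_inv_le_iff₀ hexpos, sub_mul, one_mul, inv_mul_cancel₀ (ne_of_gt hexpos)]
    linarith
  have key2 : 1 - r ≤ x := by
    have := Real.add_one_le_exp (-x)
    rw [hr]; linarith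
  have hrN : r ^ N = Real.exp (-(lam * T)) := by
    rw [hr, ← Real.exp_nat_mul]
    congr 1
    rw [hx, hh]
    field_simp
  set S : ℝ := ∑ j ∈ Icc 1 N, r ^ j with hS
  have hSrange : S = ∑ j ∈ range N, r ^ (j + 1) := by
    rw [hS, ← Finset.Ico_add_one_right_eq_Icc, Finset.sum_Ico_eq_sum_range]
    simp [add_comm]
  have hupper : h * S ≤ (1 - r ^ N) / lam := by
    have hper : ∀ j ∈ range N, h * r ^ (j + 1) ≤ (r ^ j - r ^ (j + 1)) / lam := by
      intro j _
      rw [le_div_iff₀ hlam]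
      have hrj : (0:ℝ) ≤ r ^ j := by positivity
      calc h * r ^ (j + 1) * lam = (x * r) * r ^ j := by rw [hx]; ring
        _ ≤ (1 - r) * r ^ j := mul_le_mul_of_nonneg_right key1 hrj
        _ = r ^ j - r ^ (j + 1) := by ring
    calc h * S = ∑ j ∈ range N, h * r ^ (j + 1) := by rw [hSrange, Finset.mul_sum]
      _ ≤ ∑ j ∈ range N, (r ^ j - r ^ (j + 1)) / lam := Finset.sum_le_sum hper
      _ = (∑ j ∈ range N, (r ^ j - r ^ (j + 1))) / lam := by rw [Finset.sum_div]
      _ = (1 - r ^ N) / lam := by rw [Finset.sum_range_sub' (fun i => r ^ i) N]; norm_num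
  have hlower : (r ^ 1 - r ^ (N + 1)) / lam ≤ h * S := by
    have hper : ∀ j ∈ range N, (r ^ (j + 1) - r ^ (j + 2)) / lam ≤ h * r ^ (j + 1) := by
      intro j _
      rw [div_le_iff₀ hlam]
      have hrj : (0:ℝ) ≤ r ^ (j + 1) := by positivity
      calc r ^ (j + 1) - r ^ (j + 2) = (1 - r) * r ^ (j + 1) := by ring
        _ ≤ x * r ^ (j + 1) := mul_le_mul_of_nonneg_right key2 hrj
        _ = h * r ^ (j + 1) * lam := by rw [hx]; ring
    calc (r ^ 1 - r ^ (N + 1)) / lam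
        = (∑ j ∈ range N, (r ^ (j + 1) - r ^ (j + 2))) / lam := by
          rw [Finset.sum_range_sub' (fun i => r ^ (i + 1)) N]
      _ = ∑ j ∈ range N, (r ^ (j + 1) - r ^ (j + 2)) / lam := by rw [Finset.sum_div]
      _ ≤ ∑ j ∈ range N, h * r ^ (j + 1) := Finset.sum_le_sum hper
      _ = h * S := by rw [hSrange, Finset.mul_sum]
  have hrNpos : (0:ℝ) < r ^ N := pow_pos hr0 N
  have h1 : h * S ≤ 1 / lam := by
    refine hupper.trans ?_
    apply div_le_div_of_nonneg_right ?_ hlam.le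
    linarith
  have h2 : (r - r ^ (N + 1)) / lam ≤ h * S := by simpa using hlower
  have e1 : (1 - r) / lam ≤ h := by
    rw [div_le_iff₀ hlam, hx] at *
    linarith [key2]
  have e2 : r ^ (N + 1) / lam ≤ r ^ N / lam := by
    apply div_le_div_of_nonneg_right ?_ hlam.le
    calc r ^ (N + 1) = r ^ N * r := by ring
      _ ≤ r ^ N * 1 := by nlinarith
      _ = r ^ N := by ring
  have e3 : 1 / lam - (r - r ^ (N + 1)) / lam = (1 - r) / lam + r ^ (N + 1) / lam := by
    field_simp
    ring
  rw [abs_le]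
  constructor
  · have hp1 : 0 < r ^ N / lam := by positivity
    rw [← hrN] at *
    nlinarith [h1, hhpos]
  · calc 1 / lam - h * S ≤ 1 / lam - (r - r ^ (N + 1)) / lam := by linarith [h2]
      _ = (1 - r) / lam + r ^ (N + 1) / lam := e3
      _ ≤ h + r ^ N / lam := by linarith [e1, e2]
      _ = T / N + Real.exp (-(lam * T)) / lam := by rw [hh, hrN]

theorem inv_lambda_poisson_approx (lam eps T : ℝ) (N K : ℕ)
    (hlam : 0 < lam) (hlam2 : lam ≤ 2) (heps : 0 < eps)
    (hT : 0 < T) (hN : 0 < N) (hK : 0 < K)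
    (hTlb : Real.log (6 / (eps * lam)) / lam ≤ T)
    (hNlb : 6 * T / eps ≤ N)
    (hKlb : max (6 * T) (Real.log (6 * T / eps)) ≤ K) :
    |1 / lam -
        (T / N) * ∑ j ∈ Finset.Icc 1 N, ∑ k ∈ Finset.range K,
          poissonPMF (j * T / N) k * (1 - lam) ^ k| ≤ eps / 2 := by
  have hNpos : (0:ℝ) < N := Nat.cast_pos.mpr hN
  have hKT : 6 * T ≤ K := le_trans (le_max_left _ _) hKlb
  have hlog : Real.log (6 / (eps * lam)) ≤ lam * T := by
    rw [div_le_iff₀ hlam] at hTlb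
    linarith
  -- step error for each j
  have hstep : ∀ j ∈ Finset.Icc 1 N,
      |Real.exp (-(lam * (j * T / N)))
        - ∑ k ∈ Finset.range K, poissonPMF (j * T / N) k * (1 - lam) ^ k| ≤ (1 / 2) ^ K := by
    intro j hj
    have hjN : (j : ℝ) ≤ N := Nat.cast_le.mpr (Finset.mem_Icc.mp hj).2
    have hs0 : (0:ℝ) ≤ j * T / N := by positivity
    have hsT : (j : ℝ) * T / N ≤ T := by
      rw [div_le_iff₀ hNpos]
      nlinarith
    exact inner_step lam _ hlam hlam2 hs0 K (by linarith)
  -- sum of step errors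
  have hsum : |(T / N) * ∑ j ∈ Finset.Icc 1 N, Real.exp (-(lam * (j * T / N)))
      - (T / N) * ∑ j ∈ Finset.Icc 1 N, ∑ k ∈ Finset.range K,
          poissonPMF (j * T / N) k * (1 - lam) ^ k| ≤ T * (1 / 2) ^ K := by
    rw [← mul_sub, ← Finset.sum_sub_distrib, abs_mul]
    have habs : |(T / N : ℝ)| = T / N := abs_of_pos (by positivity)
    rw [habs]
    calc T / N * |∑ j ∈ Finset.Icc 1 N, (Real.exp (-(lam * (j * T / N)))
          - ∑ k ∈ Finset.range K, poissonPMF (j * T / N) k * (1 - lam) ^ k)|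
        ≤ T / N * ∑ j ∈ Finset.Icc 1 N, |Real.exp (-(lam * (j * T / N)))
          - ∑ k ∈ Finset.range K, poissonPMF (j * T / N) k * (1 - lam) ^ k| := by
          apply mul_le_mul_of_nonneg_left (Finset.abs_sum_le_sum_abs _ _) (by positivity)
      _ ≤ T / N * ∑ j ∈ Finset.Icc 1 N, (1 / 2 : ℝ) ^ K := by
          apply mul_le_mul_of_nonneg_left (Finset.sum_le_sum hstep) (by positivity)
      _ = T * (1 / 2) ^ K := by
          rw [Finset.sum_const, Nat.card_Icc]
          simp only [nsmul_eq_mul]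
          field_simp
          simp
  have hrb := riemann_bound lam T N hlam hT hN
  -- three epsilon/6 bounds
  have b1 : T / N ≤ eps / 6 := by
    rw [div_le_div_iff₀ hNpos (by norm_num)]
    rw [div_le_iff₀ heps] at hNlb
    linarith
  have b2 : Real.exp (-(lam * T)) / lam ≤ eps / 6 := by
    have hpos : (0:ℝ) < 6 / (eps * lam) := by positivity
    have hle : 6 / (eps * lam) ≤ Real.exp (lam * T) := by
      rw [← Real.exp_log hpos]
      exact Real.exp_le_exp.mpr hlog
    have h6 : Real.exp (-(lam * T)) ≤ eps * lam / 6 := by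
      rw [Real.exp_neg, inv_eq_one_div]
      calc 1 / Real.exp (lam * T) ≤ 1 / (6 / (eps * lam)) :=
            one_div_le_one_div_of_le hpos hle
        _ = eps * lam / 6 := by rw [one_div_div]
    calc Real.exp (-(lam * T)) / lam ≤ (eps * lam / 6) / lam :=
          div_le_div_of_nonneg_right h6 hlam.le
      _ = eps / 6 := by field_simp
  have b3 : T * (1 / 2) ^ K ≤ eps / 6 := by
    have p1 : Real.log T ≤ T - 1 := Real.log_le_sub_one_of_pos hT
    have q2 : (3:ℝ) / eps ≤ 6 / (eps * lam) := by
      rw [div_le_div_iff₀ (by positivity) (by positivity)]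
      nlinarith
    have q3 : Real.log (3 / eps) ≤ Real.log (6 / (eps * lam)) :=
      (Real.log_le_log_iff (by positivity) (by positivity)).mpr q2
    have p2 : Real.log (3 / eps) ≤ 2 * T := by nlinarith [hlog]
    have hlog6 : Real.log (6 * T / eps) ≤ 3 * T := by
      have hsplit : (6 * T / eps : ℝ) = 2 * T * (3 / eps) := by ring
      rw [hsplit, Real.log_mul (by positivity) (by positivity),
        Real.log_mul (by norm_num) (ne_of_gt hT)]
      have := Real.log_two_lt_d9
      linarith
    have hK2 : 3 * T ≤ K * Real.log 2 := by
      nlinarith [Real.log_two_gt_d9, hKT]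
    have hfin : 6 * T / eps ≤ 2 ^ K := by
      calc 6 * T / eps = Real.exp (Real.log (6 * T / eps)) :=
            (Real.exp_log (by positivity)).symm
        _ ≤ Real.exp ((K : ℝ) * Real.log 2) := Real.exp_le_exp.mpr (by linarith)
        _ = 2 ^ K := by rw [Real.exp_nat_mul, Real.exp_log two_pos]
    have h2K : (0:ℝ) < 2 ^ K := by positivity
    rw [div_le_iff₀ heps] at hfin
    have hhalf : (1 / 2 : ℝ) ^ K = 1 / 2 ^ K := by
      rw [div_pow, one_pow]
    rw [hhalf]
    rw [mul_one_div, div_le_div_iff₀ h2K (by norm_num)]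
    linarith
  calc |1 / lam -
        (T / N) * ∑ j ∈ Finset.Icc 1 N, ∑ k ∈ Finset.range K,
          poissonPMF (j * T / N) k * (1 - lam) ^ k|
      ≤ |1 / lam - (T / N) * ∑ j ∈ Finset.Icc 1 N, Real.exp (-(lam * (j * T / N)))|
        + |(T / N) * ∑ j ∈ Finset.Icc 1 N, Real.exp (-(lam * (j * T / N)))
          - (T / N) * ∑ j ∈ Finset.Icc 1 N, ∑ k ∈ Finset.range K,
              poissonPMF (j * T / N) k * (1 - lam) ^ k| := abs_sub_le _ _ _
    _ ≤ (T / N + Real.exp (-(lam * T)) / lam) + T * (1 / 2) ^ K := add_le_add hrb hsum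
    _ ≤ eps / 6 + eps / 6 + eps / 6 := by linarith
    _ = eps / 2 := by ring
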